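/- Let f : P → ℂ be arbitrary and define F(λ) := ∑_{δ|λ} f(δ). Then the q-bracket of F equals the partition power series of f: for every integer n ≥ 0, ∑_{λ⊢n} F(λ) = ∑_{k=0}^{n} (∑_{δ⊢k} f(δ)) · p(n−k); equivalently, as formal power series, ∑_{λ∈P} F(λ) q^{|λ|} = (∑_{λ∈P} f(λ) q^{|λ|}) · (∑_{λ∈P} q^{|λ|}), i.e., ⟨F⟩_q = ∑_{λ∈P} f(λ) q^{|λ|}. -/

import Mathlib

/-- The set of partition divisors (sub-partitions) of `l`. -/
def pdivisors (l : Multiset ℕ+) : Finset (Multiset ℕ+) := l.powerset.toFinset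

/-- Partition-theoretic Möbius function. -/
def pmu (l : Multiset ℕ+) : ℂ := if l.Nodup then (-1 : ℂ) ^ (Multiset.card l) else 0

/-- The "integer" of a partition: the product of its parts. -/
def nInt (l : Multiset ℕ+) : ℕ := (l.map (fun a => (a : ℕ))).prod

/-- Partition-theoretic phi function. -/
noncomputable def pphi (l : Multiset ℕ+) : ℂ :=
  (nInt l : ℂ) * ∏ a ∈ l.toFinset, (1 - (a : ℂ)⁻¹)

/-- Convert a `Nat.Partition n` to a multiset of positive integers. -/
def toPtn {n : ℕ} (p : n.Partition) : Multiset ℕ+ :=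
  p.parts.pmap (fun x hx => ⟨x, hx⟩) (fun _ hx => p.parts_pos hx)

/-- The partition function `p(n)`. -/
def partcount (n : ℕ) : ℕ := Fintype.card (Nat.Partition n)

/-- A partition lies in `P₌` iff it is nonempty with all parts equal. -/
def isPeq (l : Multiset ℕ+) : Prop :=
  ∃ (a : ℕ+) (k : ℕ), 0 < k ∧ l = Multiset.replicate k a

/-- weight of a multiset of positive naturals -/
def wt (l : Multiset ℕ+) : ℕ := (l.map (fun a : ℕ+ => (a : ℕ))).sum

def Pn (n : ℕ) : Finset (Multiset ℕ+) := Finset.univ.image (toPtn (n := n))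

lemma toPtn_map {n : ℕ} (p : n.Partition) :
    (toPtn p).map (fun a : ℕ+ => (a : ℕ)) = p.parts := by
  rw [toPtn]
  exact (Multiset.map_pmap _ _ _ _).trans ((Multiset.pmap_eq_map _ _ _ _).trans (Multiset.map_id _))

lemma wt_toPtn {n : ℕ} (p : n.Partition) : wt (toPtn p) = n := by
  have h := toPtn_map p
  simp only [wt, h, p.parts_sum]

lemma toPtn_injective {n : ℕ} : Function.Injective (toPtn (n := n)) := by
  intro p q h
  ext1
  have := congrArg (Multiset.map (fun a : ℕ+ => (a : ℕ))) h
  rwa [toPtn_map, toPtn_map] at this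

lemma mem_Pn {n : ℕ} {l : Multiset ℕ+} : l ∈ Pn n ↔ wt l = n := by
  constructor
  · rintro hl
    simp only [Pn, Finset.mem_image] at hl
    obtain ⟨p, _, rfl⟩ := hl
    exact wt_toPtn p
  · intro hl
    have hpos : ∀ i ∈ l.map (fun a : ℕ+ => (a : ℕ)), 0 < i := by
      intro i hi
      simp only [Multiset.mem_map] at hi
      obtain ⟨a, _, rfl⟩ := hi
      exact a.pos
    refine Finset.mem_image.2
      ⟨⟨l.map (fun a : ℕ+ => (a : ℕ)), fun {i} hi => hpos i hi, hl⟩, Finset.mem_univ _, ?_⟩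
    apply Multiset.map_injective (f := fun a : ℕ+ => (a : ℕ)) (fun _ _ h => PNat.coe_injective h)
    rw [toPtn_map]

lemma card_Pn (n : ℕ) : (Pn n).card = partcount n := by
  rw [Pn, Finset.card_image_of_injective _ toPtn_injective, partcount, Finset.card_univ]

lemma mem_pdivisors {l d : Multiset ℕ+} : d ∈ pdivisors l ↔ d ≤ l := by
  rw [pdivisors, Multiset.mem_toFinset, Multiset.mem_powerset]

lemma wt_add (a b : Multiset ℕ+) : wt (a + b) = wt a + wt b := by
  simp [wt]

lemma sum_Pn (m : ℕ) (g : Multiset ℕ+ → ℂ) :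
    (∑ p : m.Partition, g (toPtn p)) = ∑ l ∈ Pn m, g l := by
  rw [Pn, Finset.sum_image (fun a _ b _ h => toPtn_injective h)]

/-- If `F(λ) = ∑_{δ|λ} f(δ)`, then `⟨F⟩_q = ∑_{λ∈P} f(λ) q^{|λ|}`: in graded form, for
every `n ≥ 0`, `∑_{λ⊢n} F(λ) = ∑_{k=0}^{n} (∑_{δ⊢k} f(δ))·p(n−k)`. -/
theorem qbracket_of_divisor_sum (f F : Multiset ℕ+ → ℂ)
    (hF : ∀ l : Multiset ℕ+, F l = ∑ δ ∈ pdivisors l, f δ) (n : ℕ) :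
    (∑ p : n.Partition, F (toPtn p))
      = ∑ k ∈ Finset.range (n + 1),
          (∑ d : k.Partition, f (toPtn d)) * (partcount (n - k) : ℂ) := by
  simp only [hF]
  rw [sum_Pn n (fun l => ∑ δ ∈ pdivisors l, f δ)]
  have key : (∑ l ∈ Pn n, ∑ δ ∈ pdivisors l, f δ)
      = ∑ x ∈ (Finset.range (n+1)).sigma
          (fun k => (Pn k).sigma (fun _ => Pn (n-k))), f x.2.1 := by
    rw [← Finset.sum_sigma (Pn n) (fun l => pdivisors l) (fun x => f x.2)]
    refine Finset.sum_bij'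
      (fun (x : Σ _ : Multiset ℕ+, Multiset ℕ+) _ =>
        (⟨wt x.2, x.2, x.1 - x.2⟩ : Σ _ : ℕ, Σ _ : Multiset ℕ+, Multiset ℕ+))
      (fun y _ => ⟨y.2.1 + y.2.2, y.2.1⟩) ?_ ?_ ?_ ?_ ?_
    · rintro ⟨l, d⟩ hx
      dsimp only
      rw [Finset.mem_sigma] at hx
      obtain ⟨hl, hd⟩ := hx
      rw [mem_Pn] at hl
      rw [mem_pdivisors] at hd
      have hsplit : wt d + wt (l - d) = n := by
        rw [← wt_add, add_tsub_cancel_of_le hd, hl]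
      simp only [Finset.mem_sigma, Finset.mem_range, mem_Pn]
      exact ⟨by omega, trivial, by omega⟩
    · rintro ⟨k, d, m⟩ hy
      dsimp only
      simp only [Finset.mem_sigma, Finset.mem_range, mem_Pn] at hy
      obtain ⟨hk, hd, hm⟩ := hy
      rw [Finset.mem_sigma, mem_Pn, mem_pdivisors]
      exact ⟨by rw [wt_add, hd, hm]; omega, le_add_right (le_refl d)⟩
    · rintro ⟨l, d⟩ hx
      dsimp only
      rw [Finset.mem_sigma, mem_pdivisors] at hx
      simp [add_tsub_cancel_of_le hx.2]
    · rintro ⟨k, d, m⟩ hy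
      dsimp only
      simp only [Finset.mem_sigma, Finset.mem_range, mem_Pn] at hy
      obtain ⟨hk, hd, hm⟩ := hy
      simp [hd, add_tsub_cancel_left]
    · intro x hx; rfl
  rw [key, Finset.sum_sigma]
  refine Finset.sum_congr rfl fun k hk => ?_
  rw [Finset.sum_sigma, sum_Pn k f, ← card_Pn]
  simp [Finset.sum_const, mul_comm, Finset.sum_mul]
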